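/- Let X, Y ∈ ℝ^{d×n} satisfy XᵀX = YᵀY. Then there exists an orthogonal matrix Q ∈ ℝ^{d×d} with Y = QX. -/

import Mathlib

open Matrix

private lemma toEuclideanLin_mul {a b c : ℕ} (M : Matrix (Fin a) (Fin b) ℝ)
    (N : Matrix (Fin b) (Fin c) ℝ) (v : EuclideanSpace ℝ (Fin c)) :
    Matrix.toEuclideanLin (M * N) v = Matrix.toEuclideanLin M (Matrix.toEuclideanLin N v) := by
  simp [Matrix.toEuclideanLin_apply, Matrix.mulVec_mulVec]

/-- If `XᵀX = YᵀY` then `Y = QX` for some orthogonal `Q`. -/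
theorem gram_eq_implies_orth_related (d n : ℕ) (hd : 0 < d) (hn : 0 < n)
    (X Y : Matrix (Fin d) (Fin n) ℝ) (h : Xᵀ * X = Yᵀ * Y) :
    ∃ Q : Matrix (Fin d) (Fin d) ℝ, Qᵀ * Q = 1 ∧ Y = Q * X := by
  classical
  set A : EuclideanSpace ℝ (Fin n) →ₗ[ℝ] EuclideanSpace ℝ (Fin d) := Matrix.toEuclideanLin X
  set B : EuclideanSpace ℝ (Fin n) →ₗ[ℝ] EuclideanSpace ℝ (Fin d) := Matrix.toEuclideanLin Y
  have key : ∀ v w : EuclideanSpace ℝ (Fin n),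
      (inner ℝ (A v) (A w) : ℝ) = inner ℝ (B v) (B w) := by
    intro v w
    have hX : (inner ℝ (A v) (A w) : ℝ) = inner ℝ v (Matrix.toEuclideanLin (Xᵀ * X) w) := by
      have : (Xᵀ : Matrix (Fin n) (Fin d) ℝ) = Xᴴ := rfl
      rw [toEuclideanLin_mul, this, Matrix.toEuclideanLin_conjTranspose_eq_adjoint,
        LinearMap.adjoint_inner_right]
    have hY : (inner ℝ (B v) (B w) : ℝ) = inner ℝ v (Matrix.toEuclideanLin (Yᵀ * Y) w) := by
      have : (Yᵀ : Matrix (Fin n) (Fin d) ℝ) = Yᴴ := rfl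
      rw [toEuclideanLin_mul, this, Matrix.toEuclideanLin_conjTranspose_eq_adjoint,
        LinearMap.adjoint_inner_right]
    rw [hX, hY, h]
  have hnorm : ∀ v : EuclideanSpace ℝ (Fin n), ‖A v‖ = ‖B v‖ := by
    intro v
    have := key v v
    rw [real_inner_self_eq_norm_sq, real_inner_self_eq_norm_sq] at this
    nlinarith [norm_nonneg (A v), norm_nonneg (B v)]
  have hker : LinearMap.ker A ≤ LinearMap.ker B := by
    intro v hv
    rw [LinearMap.mem_ker] at hv ⊢
    have := hnorm v
    rw [hv, norm_zero] at this
    exact norm_eq_zero.mp this.symm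
  set f0 : (EuclideanSpace ℝ (Fin n) ⧸ LinearMap.ker A) →ₗ[ℝ] EuclideanSpace ℝ (Fin d) :=
    (LinearMap.ker A).liftQ B hker
  set e := A.quotKerEquivRange
  set f : LinearMap.range A →ₗ[ℝ] EuclideanSpace ℝ (Fin d) := f0 ∘ₗ (e.symm : _ →ₗ[ℝ] _)
  have hf : ∀ v : EuclideanSpace ℝ (Fin n),
      f ⟨A v, LinearMap.mem_range_self A v⟩ = B v := by
    intro v
    have h1 : e.symm ⟨A v, LinearMap.mem_range_self A v⟩ = Submodule.Quotient.mk v :=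
      A.quotKerEquivRange_symm_apply_image v (LinearMap.mem_range_self A v)
    simp only [f, LinearMap.coe_comp, Function.comp_apply, LinearEquiv.coe_coe, h1]
    exact Submodule.liftQ_apply _ _ _
  have hfnorm : ∀ x : LinearMap.range A, ‖f x‖ = ‖x‖ := by
    rintro ⟨x, v, rfl⟩
    rw [hf v, ← hnorm v]
    rfl
  set L : LinearMap.range A →ₗᵢ[ℝ] EuclideanSpace ℝ (Fin d) := ⟨f, hfnorm⟩
  set L' := L.extend
  set Q : Matrix (Fin d) (Fin d) ℝ := Matrix.toEuclideanLin.symm L'.toLinearMap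
  have hQ : Matrix.toEuclideanLin Q = L'.toLinearMap := Matrix.toEuclideanLin.apply_symm_apply _
  have hQX : ∀ v : EuclideanSpace ℝ (Fin n),
      Matrix.toEuclideanLin (Q * X) v = B v := by
    intro v
    rw [toEuclideanLin_mul, hQ]
    have : A v = ((⟨A v, LinearMap.mem_range_self A v⟩ : LinearMap.range A) :
        EuclideanSpace ℝ (Fin d)) := rfl
    show L' (A v) = B v
    rw [this, L.extend_apply]
    exact hf v
  refine ⟨Q, ?_, ?_⟩
  · apply Matrix.toEuclideanLin.injective
    apply LinearMap.ext
    intro v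
    rw [toEuclideanLin_mul]
    have hQt : (Qᵀ : Matrix (Fin d) (Fin d) ℝ) = Qᴴ := rfl
    rw [hQt, Matrix.toEuclideanLin_conjTranspose_eq_adjoint, hQ]
    apply ext_inner_left ℝ
    intro w
    rw [LinearMap.adjoint_inner_right]
    show (inner ℝ (L' w) (L' v) : ℝ) = inner ℝ w (Matrix.toEuclideanLin 1 v)
    rw [L'.inner_map_map]
    congr 1
    simp [Matrix.toEuclideanLin_apply]
  · apply Matrix.toEuclideanLin.injective
    apply LinearMap.ext
    intro v
    rw [hQX v]
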